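/- The packet-level code over F_3 with k = 2, n = 3 and parity symbol p_0(t) = m_0(t−5) + 2·m_1(t−4) + m_0(t−2) + m_1(t−1) is a (2,5,2) locally recoverable streaming code; i.e., it is simultaneously a (1,2) SC and a (2,5) SC. Its rate is 2/3, which equals min{(5+1−2)/(5+1), 2/(2+1)}, so it is a rate-optimal (2,5,2) LRSC. -/

import Mathlib

/-- A packet-level code with a causal systematic encoder: the parity part of the
coded packet at time `t` is a fixed function of the message packets at times `≤ t`. -/
structure PacketCode (F : Type) (k n : ℕ) where
  parity : (ℤ → Fin k → F) → ℤ → Fin (n - k) → F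
  causal : ∀ (m m' : ℤ → Fin k → F) (t : ℤ),
    (∀ t' ≤ t, m t' = m' t') → parity m t = parity m' t

/-- A valid message stream vanishes at negative times. -/
def IsMsgStream {F : Type} [Zero F] {k : ℕ} (m : ℤ → Fin k → F) : Prop :=
  ∀ t < 0, m t = 0

/-- `(a, τ)` streaming-code property. -/
def IsSC {F : Type} [Zero F] {k n : ℕ} (C : PacketCode F k n) (a τ : ℕ) : Prop :=
  ∀ m m' : ℤ → Fin k → F, IsMsgStream m → IsMsgStream m' →
    ∀ t : ℤ, 0 ≤ t →
      ∀ E : Finset ℤ, (∀ x ∈ E, t ≤ x ∧ x ≤ t + τ) → t ∈ E → E.card ≤ a →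
        (∀ t' < t, m t' = m' t') →
        (∀ t' : ℤ, t ≤ t' → t' ≤ t + τ → t' ∉ E →
          m t' = m' t' ∧ C.parity m t' = C.parity m' t') →
        m t = m' t

/-- `(a, τ, r)` locally recoverable streaming code. -/
def IsLRSC {F : Type} [Zero F] {k n : ℕ} (C : PacketCode F k n) (a τ r : ℕ) : Prop :=
  IsSC C a τ ∧ IsSC C 1 r

/-- The `(2,5,2)` example code over `F₃`: `k = 2`, `n = 3`, with parity symbol
`p₀(t) = m₀(t-5) + 2·m₁(t-4) + m₀(t-2) + m₁(t-1)`. -/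
def exampleCode252 : PacketCode (ZMod 3) 2 3 where
  parity := fun m t _ =>
    m (t - 5) 0 + 2 * m (t - 4) 1 + m (t - 2) 0 + m (t - 1) 1
  causal := by
    intro m m' t h
    funext s
    try dsimp only
    rw [h (t - 5) (by omega), h (t - 4) (by omega), h (t - 2) (by omega),
      h (t - 1) (by omega)]

/-- The example code is a rate-optimal `(2,5,2)` LRSC over `F₃`: it is
simultaneously a `(1,2)` SC and a `(2,5)` SC, and its rate `2/3` equals
`min{(5+1-2)/(5+1), 2/(2+1)}`. -/
private lemma triple_not_mem {E : Finset ℤ} (hcard : E.card ≤ 2) {a b c : ℤ}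
    (ha : a ∈ E) (hb : b ∈ E) (hab : a ≠ b) (hac : a ≠ c) (hbc : b ≠ c) : c ∉ E := by
  intro hc
  have hsub : ({a, b, c} : Finset ℤ) ⊆ E := by
    intro x hx
    simp only [Finset.mem_insert, Finset.mem_singleton] at hx
    rcases hx with rfl | rfl | rfl <;> assumption
  have h3 : ({a, b, c} : Finset ℤ).card = 3 := by
    rw [Finset.card_insert_of_notMem (by simp [hab, hac]),
      Finset.card_insert_of_notMem (by simp [hbc]), Finset.card_singleton]
  have := Finset.card_le_card hsub
  omega

private lemma pair_not_mem {E : Finset ℤ} (hcard : E.card ≤ 1) {a c : ℤ}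
    (ha : a ∈ E) (hac : a ≠ c) : c ∉ E := by
  intro hc
  have hsub : ({a, c} : Finset ℤ) ⊆ E := by
    intro x hx
    simp only [Finset.mem_insert, Finset.mem_singleton] at hx
    rcases hx with rfl | rfl <;> assumption
  have h2 : ({a, c} : Finset ℤ).card = 2 := by
    rw [Finset.card_insert_of_notMem (by simp [hac]), Finset.card_singleton]
  have := Finset.card_le_card hsub
  omega

private lemma parity_eq {m m' : ℤ → Fin 2 → ZMod 3} {s : ℤ}
    (hq : exampleCode252.parity m s = exampleCode252.parity m' s) :
    m (s - 5) 0 + 2 * m (s - 4) 1 + m (s - 2) 0 + m (s - 1) 1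
      = m' (s - 5) 0 + 2 * m' (s - 4) 1 + m' (s - 2) 0 + m' (s - 1) 1 :=
  congrFun hq 0

theorem exampleCode252_isLRSC :
    IsLRSC exampleCode252 2 5 2 ∧
    (2 : ℚ) / 3 = min (((5 : ℚ) + 1 - 2) / ((5 : ℚ) + 1)) ((2 : ℚ) / ((2 : ℚ) + 1)) := by
  refine ⟨⟨?_, ?_⟩, by norm_num⟩
  · -- (2,5) SC
    intro m m' _ _ t _ E _ htE hcard hpast h
    have hp : ∀ t' < t, ∀ i, m t' i = m' t' i := fun t' h' i => congrFun (hpast t' h') i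
    by_cases h1 : (t + 1) ∈ E
    · -- E = {t, t+1}
      have h2 : (t + 2) ∉ E := triple_not_mem hcard htE h1 (by omega) (by omega) (by omega)
      have h3 : (t + 3) ∉ E := triple_not_mem hcard htE h1 (by omega) (by omega) (by omega)
      have h4 : (t + 4) ∉ E := triple_not_mem hcard htE h1 (by omega) (by omega) (by omega)
      have h5 : (t + 5) ∉ E := triple_not_mem hcard htE h1 (by omega) (by omega) (by omega)
      have k2 := (h (t + 2) (by omega) (by omega) h2).1
      have k3 := (h (t + 3) (by omega) (by omega) h3).1
      have k4 := (h (t + 4) (by omega) (by omega) h4).1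
      have q2 := parity_eq (h (t + 2) (by omega) (by omega) h2).2
      have q3 := parity_eq (h (t + 3) (by omega) (by omega) h3).2
      have q4 := parity_eq (h (t + 4) (by omega) (by omega) h4).2
      have q5 := parity_eq (h (t + 5) (by omega) (by omega) h5).2
      rw [show t + 2 - 5 = t - 3 from by ring, show t + 2 - 4 = t - 2 from by ring,
        show t + 2 - 2 = t from by ring, show t + 2 - 1 = t + 1 from by ring] at q2
      rw [show t + 3 - 5 = t - 2 from by ring, show t + 3 - 4 = t - 1 from by ring,
        show t + 3 - 2 = t + 1 from by ring, show t + 3 - 1 = t + 2 from by ring] at q3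
      rw [show t + 4 - 5 = t - 1 from by ring, show t + 4 - 4 = t from by ring,
        show t + 4 - 2 = t + 2 from by ring, show t + 4 - 1 = t + 3 from by ring] at q4
      rw [show t + 5 - 5 = t from by ring, show t + 5 - 4 = t + 1 from by ring,
        show t + 5 - 2 = t + 3 from by ring, show t + 5 - 1 = t + 4 from by ring] at q5
      -- m t 1 from q4
      have hm1 : m t 1 = m' t 1 := by
        have e : (2 : ZMod 3) * m t 1 = 2 * m' t 1 := by
          linear_combination q4 - hp (t - 1) (by omega) 0 - congrFun k2 0 - congrFun k3 1
        exact mul_left_cancel₀ (by decide : (2 : ZMod 3) ≠ 0) e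
      -- m t 0 from q2 and q5
      have e2 : m t 0 + m (t + 1) 1 = m' t 0 + m' (t + 1) 1 := by
        linear_combination q2 - hp (t - 3) (by omega) 0 - 2 * hp (t - 2) (by omega) 1
      have e5 : m t 0 + 2 * m (t + 1) 1 = m' t 0 + 2 * m' (t + 1) 1 := by
        linear_combination q5 - congrFun k3 0 - congrFun k4 1
      have hm0 : m t 0 = m' t 0 := by linear_combination 2 * e2 - e5
      funext i
      fin_cases i
      · exact hm0
      · exact hm1
    · by_cases h2 : (t + 2) ∈ E
      · -- E = {t, t+2}
        have h3 : (t + 3) ∉ E := triple_not_mem hcard htE h2 (by omega) (by omega) (by omega)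
        have h4 : (t + 4) ∉ E := triple_not_mem hcard htE h2 (by omega) (by omega) (by omega)
        have h5 : (t + 5) ∉ E := triple_not_mem hcard htE h2 (by omega) (by omega) (by omega)
        have k1 := (h (t + 1) (by omega) (by omega) h1).1
        have k3 := (h (t + 3) (by omega) (by omega) h3).1
        have k4 := (h (t + 4) (by omega) (by omega) h4).1
        have q1 := parity_eq (h (t + 1) (by omega) (by omega) h1).2
        have q5 := parity_eq (h (t + 5) (by omega) (by omega) h5).2
        rw [show t + 1 - 5 = t - 4 from by ring, show t + 1 - 4 = t - 3 from by ring,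
          show t + 1 - 2 = t - 1 from by ring, show t + 1 - 1 = t from by ring] at q1
        rw [show t + 5 - 5 = t from by ring, show t + 5 - 4 = t + 1 from by ring,
          show t + 5 - 2 = t + 3 from by ring, show t + 5 - 1 = t + 4 from by ring] at q5
        have hm1 : m t 1 = m' t 1 := by
          linear_combination q1 - hp (t - 4) (by omega) 0 - 2 * hp (t - 3) (by omega) 1
            - hp (t - 1) (by omega) 0
        have hm0 : m t 0 = m' t 0 := by
          linear_combination q5 - 2 * congrFun k1 1 - congrFun k3 0 - congrFun k4 1
        funext i
        fin_cases i
        · exact hm0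
        · exact hm1
      · -- t+1, t+2 ∉ E
        have k1 := (h (t + 1) (by omega) (by omega) h1).1
        have q1 := parity_eq (h (t + 1) (by omega) (by omega) h1).2
        have q2 := parity_eq (h (t + 2) (by omega) (by omega) h2).2
        rw [show t + 1 - 5 = t - 4 from by ring, show t + 1 - 4 = t - 3 from by ring,
          show t + 1 - 2 = t - 1 from by ring, show t + 1 - 1 = t from by ring] at q1
        rw [show t + 2 - 5 = t - 3 from by ring, show t + 2 - 4 = t - 2 from by ring,
          show t + 2 - 2 = t from by ring, show t + 2 - 1 = t + 1 from by ring] at q2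
        have hm1 : m t 1 = m' t 1 := by
          linear_combination q1 - hp (t - 4) (by omega) 0 - 2 * hp (t - 3) (by omega) 1
            - hp (t - 1) (by omega) 0
        have hm0 : m t 0 = m' t 0 := by
          linear_combination q2 - hp (t - 3) (by omega) 0 - 2 * hp (t - 2) (by omega) 1
            - congrFun k1 1
        funext i
        fin_cases i
        · exact hm0
        · exact hm1
  · -- (1,2) SC
    intro m m' _ _ t _ E _ htE hcard hpast h
    have hp : ∀ t' < t, ∀ i, m t' i = m' t' i := fun t' h' i => congrFun (hpast t' h') i
    have h1 : (t + 1) ∉ E := pair_not_mem hcard htE (by omega)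
    have h2 : (t + 2) ∉ E := pair_not_mem hcard htE (by omega)
    have k1 := (h (t + 1) (by omega) (by omega) h1).1
    have q1 := parity_eq (h (t + 1) (by omega) (by omega) h1).2
    have q2 := parity_eq (h (t + 2) (by omega) (by omega) h2).2
    rw [show t + 1 - 5 = t - 4 from by ring, show t + 1 - 4 = t - 3 from by ring,
      show t + 1 - 2 = t - 1 from by ring, show t + 1 - 1 = t from by ring] at q1
    rw [show t + 2 - 5 = t - 3 from by ring, show t + 2 - 4 = t - 2 from by ring,
      show t + 2 - 2 = t from by ring, show t + 2 - 1 = t + 1 from by ring] at q2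
    have hm1 : m t 1 = m' t 1 := by
      linear_combination q1 - hp (t - 4) (by omega) 0 - 2 * hp (t - 3) (by omega) 1
        - hp (t - 1) (by omega) 0
    have hm0 : m t 0 = m' t 0 := by
      linear_combination q2 - hp (t - 3) (by omega) 0 - 2 * hp (t - 2) (by omega) 1
        - congrFun k1 1
    funext i
    fin_cases i
    · exact hm0
    · exact hm1
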